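/- Let x₁, …, x_N be as in the periodic setting, solving the Euler–Lagrange system with zero potential gradient, assume r ↦ G'(r) r² is nondecreasing on (0, ∞), and let U : [0, ∞) → ℝ be twice continuously differentiable and convex. Then for every t ∈ [0, T], Σ_{i=1}^{N} U(Rᵢ(t)) (xᵢ(t) − x_{i−1}(t)) ≤ (t/T) Σ_{i=1}^{N} U(Rᵢ(T)) (xᵢ(T) − x_{i−1}(T)) + (1 − t/T) Σ_{i=1}^{N} U(Rᵢ(0)) (xᵢ(0) − x_{i−1}(0)). -/

import Mathlib

open Set Finset

/-- Discrete density `Rᵢ(t) = δ/(xᵢ(t) − x_{i−1}(t))`, `δ = 1/N`, periodic indexing by `ℤ`. -/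
noncomputable def Rd (N : ℕ) (x : ℤ → ℝ → ℝ) (i : ℤ) (t : ℝ) : ℝ :=
  ((1 : ℝ) / N) / (x i t - x (i - 1) t)

open Filter in
lemma aux_deriv_nonneg {f : ℝ → ℝ} {x f' : ℝ} (hm : MonotoneOn f (Set.Ioi 0))
    (hx : 0 < x) (hf : HasDerivAt f f' x) : 0 ≤ f' := by
  have h := hasDerivAt_iff_tendsto_slope.mp hf
  have h2 : Tendsto (slope f x) (nhdsWithin x (Set.Ioi x)) (nhds f') :=
    h.mono_left (nhdsWithin_mono x (fun y hy => ne_of_gt hy))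
  refine ge_of_tendsto h2 ?_
  filter_upwards [self_mem_nhdsWithin, eventually_mem_nhdsWithin] with y hy _
  have hxy : x < y := hy
  rw [slope_def_field]
  apply div_nonneg _ (by linarith)
  have := hm (Set.mem_Ioi.mpr hx) (Set.mem_Ioi.mpr (lt_trans hx hxy)) hxy.le
  linarith

lemma aux_abel {Ψ A : ℤ → ℝ} {n : ℤ} (hn : 2 ≤ n) (hΨ : Ψ (n + 1) = Ψ 1) (hA : A n = A 0) :
    ∑ i ∈ Finset.Icc 1 n, Ψ i * (A i - A (i - 1)) =
      ∑ i ∈ Finset.Icc 1 n, (Ψ i - Ψ (i + 1)) * A i := by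
  have h : ∑ i ∈ Finset.Icc 1 n, Ψ i * A (i - 1) =
      ∑ i ∈ Finset.Icc 1 n, Ψ (i + 1) * A i := by
    have e1 : ∑ i ∈ Finset.Icc (1:ℤ) n, Ψ i * A (i - 1) =
        ∑ j ∈ Finset.Icc (0:ℤ) (n - 1), Ψ (j + 1) * A j := by
      have hmap : Finset.Icc (1:ℤ) n =
          (Finset.Icc (0:ℤ) (n - 1)).map ⟨fun j => j + 1, add_left_injective 1⟩ := by
        ext k
        simp only [Finset.mem_map, Finset.mem_Icc, Function.Embedding.coeFn_mk]
        constructor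
        · intro hk; exact ⟨k - 1, by omega, by ring⟩
        · rintro ⟨a, ha, rfl⟩; omega
      rw [hmap, Finset.sum_map]
      simp only [Function.Embedding.coeFn_mk, add_sub_cancel_right]
    have e2 : ∑ j ∈ Finset.Icc (0:ℤ) (n - 1), Ψ (j + 1) * A j =
        Ψ 1 * A 0 + ∑ j ∈ Finset.Icc (1:ℤ) (n - 1), Ψ (j + 1) * A j := by
      rw [show Finset.Icc (0:ℤ) (n - 1) = insert 0 (Finset.Icc 1 (n - 1)) by
        ext k; simp only [Finset.mem_insert, Finset.mem_Icc]; omega]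
      rw [Finset.sum_insert (by simp [Finset.mem_Icc])]
      norm_num
    have e3 : ∑ i ∈ Finset.Icc (1:ℤ) n, Ψ (i + 1) * A i =
        (∑ j ∈ Finset.Icc (1:ℤ) (n - 1), Ψ (j + 1) * A j) + Ψ (n + 1) * A n := by
      rw [show Finset.Icc (1:ℤ) n = insert n (Finset.Icc 1 (n - 1)) by
        ext k; simp only [Finset.mem_insert, Finset.mem_Icc]; omega]
      rw [Finset.sum_insert (by simp only [Finset.mem_Icc]; omega)]
      ring
    rw [e1, e2, e3, hΨ, hA]; ring
  simp only [mul_sub, sub_mul]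
  rw [Finset.sum_sub_distrib, Finset.sum_sub_distrib, h]

lemma aux_Uc2 {U : ℝ → ℝ} (hU : ContDiffOn ℝ 2 U (Ici 0)) {r : ℝ} (hr : 0 < r) :
    ContDiffAt ℝ 2 U r := hU.contDiffAt (Ici_mem_nhds hr)

lemma aux_U1 {U : ℝ → ℝ} (hU : ContDiffOn ℝ 2 U (Ici 0)) {r : ℝ} (hr : 0 < r) :
    HasDerivAt U (deriv U r) r :=
  ((aux_Uc2 hU hr).differentiableAt (by norm_num)).hasDerivAt

lemma aux_Ud1 {U : ℝ → ℝ} (hU : ContDiffOn ℝ 2 U (Ici 0)) {r : ℝ} (hr : 0 < r) :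
    ContDiffAt ℝ 1 (deriv U) r := by
  have hf := (aux_Uc2 hU hr).fderiv_right (m := 1) (by norm_num)
  have h2 : ContDiffAt ℝ 1 (fun y => fderiv ℝ U y 1) r := hf.clm_apply contDiffAt_const
  have he : deriv U = fun y => fderiv ℝ U y 1 := funext fun y => (fderiv_apply_one_eq_deriv).symm
  rw [he]; exact h2

lemma aux_U2 {U : ℝ → ℝ} (hU : ContDiffOn ℝ 2 U (Ici 0)) {r : ℝ} (hr : 0 < r) :
    HasDerivAt (deriv U) (deriv (deriv U) r) r :=
  ((aux_Ud1 hU hr).differentiableAt (by norm_num)).hasDerivAt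

lemma aux_U2nonneg {U : ℝ → ℝ} (hU : ContDiffOn ℝ 2 U (Ici 0))
    (hUconv : ConvexOn ℝ (Ici 0) U) {r : ℝ} (hr : 0 < r) : 0 ≤ deriv (deriv U) r := by
  have hmono : MonotoneOn (deriv U) (Set.Ioi 0) :=
    (hUconv.subset Ioi_subset_Ici_self (convex_Ioi 0)).monotoneOn_deriv
      (fun y hy => (aux_Uc2 hU hy).differentiableAt (by norm_num))
  exact aux_deriv_nonneg hmono hr (aux_U2 hU hr)

lemma aux_psi_anti {U : ℝ → ℝ} (hU : ContDiffOn ℝ 2 U (Ici 0))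
    (hUconv : ConvexOn ℝ (Ici 0) U) {a b : ℝ} (ha : 0 < a) (hab : a ≤ b) :
    U b - b * deriv U b ≤ U a - a * deriv U a := by
  rcases eq_or_lt_of_le hab with rfl | h
  · exact le_rfl
  have hca : ConvexOn ℝ (Set.Ioi 0) U := hUconv.subset Ioi_subset_Ici_self (convex_Ioi 0)
  have hb : 0 < b := lt_trans ha h
  have h1 : deriv U a ≤ slope U a b :=
    hca.deriv_le_slope (Set.mem_Ioi.mpr ha) (Set.mem_Ioi.mpr hb) h
      ((aux_Uc2 hU ha).differentiableAt (by norm_num))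
  have h2 : slope U a b ≤ deriv U b :=
    hca.slope_le_deriv (Set.mem_Ioi.mpr ha) (Set.mem_Ioi.mpr hb) h
      ((aux_Uc2 hU hb).differentiableAt (by norm_num))
  have hba : (0:ℝ) < b - a := by linarith
  have hs : slope U a b = (U b - U a) / (b - a) := slope_def_field U a b
  rw [hs] at h1 h2
  have h1' : deriv U a * (b - a) ≤ U b - U a := (le_div_iff₀ hba).mp h1
  have h2' : U b - U a ≤ deriv U b * (b - a) := (div_le_iff₀ hba).mp h2
  have hU'le : deriv U a ≤ deriv U b :=
    le_of_mul_le_mul_right (by linarith) hba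
  nlinarith [mul_nonneg ha.le (sub_nonneg.mpr hU'le)]

/-- Along solutions of the periodic Euler–Lagrange system with zero potential gradient,
for any convex `U ∈ C²([0,∞))` the discrete internal energy at time `t` is bounded by the
corresponding convex combination of its initial and terminal values. -/
theorem stmt_2
    (N : ℕ) (hN : 2 ≤ N) (T : ℝ) (hT : 0 < T)
    (x : ℤ → ℝ → ℝ)
    (hper : ∀ i t, x (i + N) t = x i t + 1)
    (hx : ∀ i, ContDiff ℝ 2 (x i))
    (hord : ∀ i, ∀ t ∈ Icc (0:ℝ) T, x i t < x (i + 1) t)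
    (L : ℝ → ℝ) (hL : ContDiff ℝ 2 L)
    (hL'' : ∀ u, 0 < deriv (deriv L) u)
    (G : ℝ → ℝ) (hG : ContDiffOn ℝ 1 G (Ioi 0))
    (hB : MonotoneOn (fun r => deriv G r * r ^ 2) (Ioi 0))
    (hEL : ∀ i, ∀ t ∈ Icc (0:ℝ) T,
      deriv (deriv L) (deriv (x i) t) * deriv (deriv (x i)) t =
        N * (deriv G (Rd N x (i + 1) t) * (Rd N x (i + 1) t) ^ 2
          - deriv G (Rd N x i t) * (Rd N x i t) ^ 2))
    (U : ℝ → ℝ) (hU : ContDiffOn ℝ 2 U (Ici 0))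
    (hUconv : ConvexOn ℝ (Ici 0) U) :
    ∀ t ∈ Icc (0:ℝ) T,
      ∑ i ∈ Finset.Icc (1:ℤ) (N:ℤ), U (Rd N x i t) * (x i t - x (i - 1) t) ≤
        (t / T) * ∑ i ∈ Finset.Icc (1:ℤ) (N:ℤ), U (Rd N x i T) * (x i T - x (i - 1) T)
        + (1 - t / T) *
            ∑ i ∈ Finset.Icc (1:ℤ) (N:ℤ), U (Rd N x i 0) * (x i 0 - x (i - 1) 0) := by
  have hNR : (0:ℝ) < N := by positivity
  have hδ : (0:ℝ) < 1 / N := by positivity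
  -- positivity of gaps and densities
  have hd : ∀ (i : ℤ), ∀ t ∈ Icc (0:ℝ) T, 0 < x i t - x (i - 1) t := by
    intro i t ht
    have h := hord (i - 1) t ht
    rw [show i - 1 + 1 = i by ring] at h
    linarith
  have hRpos : ∀ (i : ℤ), ∀ t ∈ Icc (0:ℝ) T, 0 < Rd N x i t := by
    intro i t ht
    exact div_pos hδ (hd i t ht)
  -- differentiability of trajectories
  have hxd : ∀ i : ℤ, Differentiable ℝ (x i) := fun i => (hx i).differentiable (by norm_num)
  have hxd2 : ∀ i : ℤ, Differentiable ℝ (deriv (x i)) := by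
    intro i
    have h := hx i
    rw [show (2 : WithTop ℕ∞) = 1 + 1 by norm_num] at h
    exact (contDiff_succ_iff_deriv.mp h).2.2.differentiable (by norm_num)
  -- the three energy-level functions
  set E : ℝ → ℝ :=
    fun s => ∑ i ∈ Finset.Icc (1:ℤ) (N:ℤ), U (Rd N x i s) * (x i s - x (i - 1) s) with hE
  set E1 : ℝ → ℝ :=
    fun s => ∑ i ∈ Finset.Icc (1:ℤ) (N:ℤ),
      (U (Rd N x i s) - Rd N x i s * deriv U (Rd N x i s))
        * (deriv (x i) s - deriv (x (i - 1)) s) with hE1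
  set E2 : ℝ → ℝ :=
    fun s => ∑ i ∈ Finset.Icc (1:ℤ) (N:ℤ),
      ((1 / N) * (Rd N x i s * deriv (deriv U) (Rd N x i s))
          * (deriv (x i) s - deriv (x (i - 1)) s) ^ 2 / (x i s - x (i - 1) s) ^ 2
        + (U (Rd N x i s) - Rd N x i s * deriv U (Rd N x i s))
            * (deriv (deriv (x i)) s - deriv (deriv (x (i - 1))) s)) with hE2
  -- pointwise derivative computations
  have key1 : ∀ (i : ℤ), ∀ t ∈ Icc (0:ℝ) T,
      HasDerivAt (fun s => U (Rd N x i s) * (x i s - x (i - 1) s))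
        ((U (Rd N x i t) - Rd N x i t * deriv U (Rd N x i t))
          * (deriv (x i) t - deriv (x (i - 1)) t)) t := by
    intro i t ht
    have hdt : 0 < x i t - x (i - 1) t := hd i t ht
    have hne : x i t - x (i - 1) t ≠ 0 := ne_of_gt hdt
    have hdd : HasDerivAt (fun s => x i s - x (i - 1) s)
        (deriv (x i) t - deriv (x (i - 1)) t) t :=
      ((hxd i t).hasDerivAt).sub ((hxd (i - 1) t).hasDerivAt)
    have hRt : HasDerivAt (fun s => Rd N x i s)
        ((0 * (x i t - x (i - 1) t) - (1 / N) * (deriv (x i) t - deriv (x (i - 1)) t))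
          / (x i t - x (i - 1) t) ^ 2) t := by
      simp only [Rd]
      exact (hasDerivAt_const t ((1:ℝ)/N)).div hdd hne
    have hRtpos : 0 < Rd N x i t := hRpos i t ht
    have hcomp : HasDerivAt (fun s => U (Rd N x i s))
        (deriv U (Rd N x i t)
          * ((0 * (x i t - x (i - 1) t) - (1 / N) * (deriv (x i) t - deriv (x (i - 1)) t))
            / (x i t - x (i - 1) t) ^ 2)) t :=
      (aux_U1 hU hRtpos).comp t hRt
    have hmul := hcomp.fun_mul hdd
    refine HasDerivAt.congr_deriv hmul ?_
    simp only [Rd]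
    field_simp
    ring
  have key2 : ∀ (i : ℤ), ∀ t ∈ Icc (0:ℝ) T,
      HasDerivAt (fun s =>
          (U (Rd N x i s) - Rd N x i s * deriv U (Rd N x i s))
            * (deriv (x i) s - deriv (x (i - 1)) s))
        ((1 / N) * (Rd N x i t * deriv (deriv U) (Rd N x i t))
            * (deriv (x i) t - deriv (x (i - 1)) t) ^ 2 / (x i t - x (i - 1) t) ^ 2
          + (U (Rd N x i t) - Rd N x i t * deriv U (Rd N x i t))
              * (deriv (deriv (x i)) t - deriv (deriv (x (i - 1))) t)) t := by
    intro i t ht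
    have hdt : 0 < x i t - x (i - 1) t := hd i t ht
    have hne : x i t - x (i - 1) t ≠ 0 := ne_of_gt hdt
    have hdd : HasDerivAt (fun s => x i s - x (i - 1) s)
        (deriv (x i) t - deriv (x (i - 1)) t) t :=
      ((hxd i t).hasDerivAt).sub ((hxd (i - 1) t).hasDerivAt)
    have hRt : HasDerivAt (fun s => Rd N x i s)
        ((0 * (x i t - x (i - 1) t) - (1 / N) * (deriv (x i) t - deriv (x (i - 1)) t))
          / (x i t - x (i - 1) t) ^ 2) t := by
      simp only [Rd]
      exact (hasDerivAt_const t ((1:ℝ)/N)).div hdd hne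
    have hRtpos : 0 < Rd N x i t := hRpos i t ht
    set R' : ℝ := (0 * (x i t - x (i - 1) t)
        - (1 / N) * (deriv (x i) t - deriv (x (i - 1)) t)) / (x i t - x (i - 1) t) ^ 2
    have hUcomp : HasDerivAt (fun s => U (Rd N x i s)) (deriv U (Rd N x i t) * R') t :=
      (aux_U1 hU hRtpos).comp t hRt
    have hU2comp : HasDerivAt (fun s => deriv U (Rd N x i s))
        (deriv (deriv U) (Rd N x i t) * R') t :=
      (aux_U2 hU hRtpos).comp t hRt
    have hψ : HasDerivAt (fun s => U (Rd N x i s) - Rd N x i s * deriv U (Rd N x i s))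
        (deriv U (Rd N x i t) * R'
          - (R' * deriv U (Rd N x i t) + Rd N x i t * (deriv (deriv U) (Rd N x i t) * R'))) t :=
      hUcomp.sub (hRt.mul hU2comp)
    have hv : HasDerivAt (fun s => deriv (x i) s - deriv (x (i - 1)) s)
        (deriv (deriv (x i)) t - deriv (deriv (x (i - 1))) t) t :=
      ((hxd2 i t).hasDerivAt).sub ((hxd2 (i - 1) t).hasDerivAt)
    have hmul := hψ.fun_mul hv
    refine HasDerivAt.congr_deriv hmul ?_
    simp only [R', Rd]
    field_simp
    ring
  -- E and E1 derivatives via sums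
  have hE1d : ∀ t ∈ Icc (0:ℝ) T, HasDerivAt E (E1 t) t := by
    intro t ht
    exact HasDerivAt.fun_sum (fun i _ => key1 i t ht)
  have hE2d : ∀ t ∈ Icc (0:ℝ) T, HasDerivAt E1 (E2 t) t := by
    intro t ht
    exact HasDerivAt.fun_sum (fun i _ => key2 i t ht)
  -- periodicity facts
  have hd_per : ∀ t : ℝ, x ((N:ℤ) + 1) t - x ((N:ℤ) + 1 - 1) t = x 1 t - x (1 - 1) t := by
    intro t
    have h1 := hper 1 t
    have h0 := hper 0 t
    rw [show (1:ℤ) + (N:ℤ) = (N:ℤ) + 1 by ring] at h1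
    rw [show (0:ℤ) + (N:ℤ) = (N:ℤ) by ring] at h0
    rw [show (N:ℤ) + 1 - 1 = (N:ℤ) by ring, show (1:ℤ) - 1 = 0 by ring, h1, h0]
    ring
  have hRd_per : ∀ t : ℝ, Rd N x ((N:ℤ) + 1) t = Rd N x 1 t := by
    intro t; simp only [Rd]; rw [hd_per]
  have hA_per : ∀ t : ℝ, deriv (deriv (x ((N:ℤ)))) t = deriv (deriv (x 0)) t := by
    intro t
    have hfun : x ((N:ℤ)) = fun s => x 0 s + 1 := by
      funext s
      have := hper 0 s
      rw [show (0:ℤ) + (N:ℤ) = (N:ℤ) by ring] at this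
      exact this
    rw [hfun, show deriv (fun s => x 0 s + 1) = deriv (x 0) from
      funext fun s => deriv_add_const 1]
  -- nonnegativity of E2 on [0, T]
  have hE2nonneg : ∀ t ∈ Icc (0:ℝ) T, 0 ≤ E2 t := by
    intro t ht
    show (0:ℝ) ≤ ∑ i ∈ Finset.Icc (1:ℤ) (N:ℤ), _
    rw [Finset.sum_add_distrib]
    have hq : 0 ≤ ∑ i ∈ Finset.Icc (1:ℤ) (N:ℤ),
        (1 / N) * (Rd N x i t * deriv (deriv U) (Rd N x i t))
          * (deriv (x i) t - deriv (x (i - 1)) t) ^ 2 / (x i t - x (i - 1) t) ^ 2 := by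
      apply Finset.sum_nonneg
      intro i _
      apply div_nonneg _ (sq_nonneg _)
      apply mul_nonneg _ (sq_nonneg _)
      apply mul_nonneg hδ.le
      exact mul_nonneg (hRpos i t ht).le (aux_U2nonneg hU hUconv (hRpos i t ht))
    have hr : 0 ≤ ∑ i ∈ Finset.Icc (1:ℤ) (N:ℤ),
        (U (Rd N x i t) - Rd N x i t * deriv U (Rd N x i t))
          * (deriv (deriv (x i)) t - deriv (deriv (x (i - 1))) t) := by
      rw [aux_abel (by exact_mod_cast hN)
        (by rw [hRd_per t]) (hA_per t)]
      apply Finset.sum_nonneg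
      intro i _
      have hELi := hEL i t ht
      have hLpos := hL'' (deriv (x i) t)
      have hkey : 0 ≤ ((U (Rd N x i t) - Rd N x i t * deriv U (Rd N x i t))
          - (U (Rd N x (i + 1) t) - Rd N x (i + 1) t * deriv U (Rd N x (i + 1) t)))
          * ((N:ℝ) * (deriv G (Rd N x (i + 1) t) * (Rd N x (i + 1) t) ^ 2
              - deriv G (Rd N x i t) * (Rd N x i t) ^ 2)) := by
        rcases le_total (Rd N x i t) (Rd N x (i + 1) t) with hle | hle
        · have hpsi := aux_psi_anti hU hUconv (hRpos i t ht) hle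
          have hBle := hB (Set.mem_Ioi.mpr (hRpos i t ht))
            (Set.mem_Ioi.mpr (hRpos (i + 1) t ht)) hle
          simp only at hBle
          apply mul_nonneg (by linarith)
          apply mul_nonneg hNR.le
          linarith
        · have hpsi := aux_psi_anti hU hUconv (hRpos (i + 1) t ht) hle
          have hBle := hB (Set.mem_Ioi.mpr (hRpos (i + 1) t ht))
            (Set.mem_Ioi.mpr (hRpos i t ht)) hle
          simp only at hBle
          have hp : (U (Rd N x i t) - Rd N x i t * deriv U (Rd N x i t))
              - (U (Rd N x (i + 1) t) - Rd N x (i + 1) t * deriv U (Rd N x (i + 1) t)) ≤ 0 := by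
            linarith
          have hq2 : (N:ℝ) * (deriv G (Rd N x (i + 1) t) * (Rd N x (i + 1) t) ^ 2
              - deriv G (Rd N x i t) * (Rd N x i t) ^ 2) ≤ 0 :=
            mul_nonpos_iff.mpr (Or.inl ⟨hNR.le, by linarith⟩)
          nlinarith [mul_nonneg (neg_nonneg.mpr hp) (neg_nonneg.mpr hq2)]
      have hwith : ((U (Rd N x i t) - Rd N x i t * deriv U (Rd N x i t))
          - (U (Rd N x (i + 1) t) - Rd N x (i + 1) t * deriv U (Rd N x (i + 1) t)))
          * deriv (deriv (x i)) t * deriv (deriv L) (deriv (x i) t)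
          = ((U (Rd N x i t) - Rd N x i t * deriv U (Rd N x i t))
          - (U (Rd N x (i + 1) t) - Rd N x (i + 1) t * deriv U (Rd N x (i + 1) t)))
          * ((N:ℝ) * (deriv G (Rd N x (i + 1) t) * (Rd N x (i + 1) t) ^ 2
              - deriv G (Rd N x i t) * (Rd N x i t) ^ 2)) := by
        rw [mul_assoc, mul_comm (deriv (deriv (x i)) t), hELi]
      nlinarith [hkey, hwith, hLpos]
    linarith
  -- convexity of E on [0, T]
  have hconv : ConvexOn ℝ (Icc (0:ℝ) T) E := by
    refine convexOn_of_hasDerivWithinAt2_nonneg (f' := E1) (f'' := E2)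
      (convex_Icc 0 T) ?_ ?_ ?_ ?_
    · intro t ht
      exact (hE1d t ht).differentiableAt.continuousAt.continuousWithinAt
    · intro t ht
      rw [interior_Icc] at ht
      exact (hE1d t (Ioo_subset_Icc_self ht)).hasDerivWithinAt
    · intro t ht
      rw [interior_Icc] at ht
      exact (hE2d t (Ioo_subset_Icc_self ht)).hasDerivWithinAt
    · intro t ht
      rw [interior_Icc] at ht
      exact hE2nonneg t (Ioo_subset_Icc_self ht)
  -- conclude
  intro t ht
  have h0m : (0:ℝ) ∈ Icc (0:ℝ) T := ⟨le_rfl, hT.le⟩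
  have hTm : T ∈ Icc (0:ℝ) T := ⟨hT.le, le_rfl⟩
  have hs0 : 0 ≤ t / T := div_nonneg ht.1 hT.le
  have hs1 : 0 ≤ 1 - t / T := by
    have : t / T ≤ 1 := (div_le_one hT).mpr ht.2
    linarith
  have hcomb := hconv.2 h0m hTm hs1 hs0 (by ring)
  have heq : (1 - t / T) • (0:ℝ) + (t / T) • T = t := by
    simp only [smul_eq_mul]
    field_simp
    ring
  rw [heq] at hcomb
  have : E t ≤ (1 - t / T) * E 0 + (t / T) * E T := by simpa using hcomb
  show E t ≤ t / T * E T + (1 - t / T) * E 0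
  linarith
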